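/- In the group G = ⟨a, b | b²a⁻²b² = a⁻¹b³a⁻¹⟩ (the knot group of the knot 5₂), the element c = a⁻¹bab⁻¹ satisfies: the nonempty product of conjugates of c given in the proof equals the identity; concretely, a⁴(b⁻²a⁻¹b³a)a⁻⁴(b²ab⁻³a⁻¹) = 1, where both b⁻²a⁻¹b³a and b²ab⁻³a⁻¹ are products of conjugates of c. -/

import Mathlib

/-- The 5₂ knot group ⟨a, b | b²a⁻²b² = a⁻¹b³a⁻¹⟩, with a ↦ true, b ↦ false. -/
def FiveTwoRels : Set (FreeGroup Bool) :=
  {FreeGroup.of false ^ 2 * (FreeGroup.of true)⁻¹ ^ 2 * FreeGroup.of false ^ 2 *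
    ((FreeGroup.of true)⁻¹ * FreeGroup.of false ^ 3 * (FreeGroup.of true)⁻¹)⁻¹}

theorem fiveTwo_product_identity :
    let a : PresentedGroup FiveTwoRels := PresentedGroup.of true
    let b : PresentedGroup FiveTwoRels := PresentedGroup.of false
    let c := a⁻¹ * b * a * b⁻¹
    let S := Subsemigroup.closure {z : PresentedGroup FiveTwoRels | ∃ g, z = g⁻¹ * c * g}
    b⁻¹ ^ 2 * a⁻¹ * b ^ 3 * a ∈ S ∧ b ^ 2 * a * b⁻¹ ^ 3 * a⁻¹ ∈ S ∧
      a ^ 4 * (b⁻¹ ^ 2 * a⁻¹ * b ^ 3 * a) * a⁻¹ ^ 4 * (b ^ 2 * a * b⁻¹ ^ 3 * a⁻¹) = 1 := by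
  intro a b c S
  have hr : b ^ 2 * a⁻¹ ^ 2 * b ^ 2 * (a⁻¹ * b ^ 3 * a⁻¹)⁻¹ = 1 := by
    have h : PresentedGroup.mk FiveTwoRels
        (FreeGroup.of false ^ 2 * (FreeGroup.of true)⁻¹ ^ 2 * FreeGroup.of false ^ 2 *
          ((FreeGroup.of true)⁻¹ * FreeGroup.of false ^ 3 * (FreeGroup.of true)⁻¹)⁻¹) = 1 := by
      apply (QuotientGroup.eq_one_iff _).mpr
      apply Subgroup.subset_normalClosure
      rfl
    simp only [map_mul, map_pow, map_inv] at h; exact h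
  have m1 : ((a⁻¹ * b ^ 3)⁻¹ * (a⁻¹ * b * a * b⁻¹) * (a⁻¹ * b ^ 3)) ∈ S :=
    Subsemigroup.subset_closure ⟨a⁻¹ * b ^ 3, rfl⟩
  have m2 : ((a⁻¹ * b ^ 4)⁻¹ * (a⁻¹ * b * a * b⁻¹) * (a⁻¹ * b ^ 4)) ∈ S :=
    Subsemigroup.subset_closure ⟨a⁻¹ * b ^ 4, rfl⟩
  have m3 : (b⁻¹ * (a⁻¹ * b * a * b⁻¹) * b) ∈ S :=
    Subsemigroup.subset_closure ⟨b, rfl⟩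
  have n1 : ((b⁻¹ ^ 2)⁻¹ * (a⁻¹ * b * a * b⁻¹) * b⁻¹ ^ 2) ∈ S :=
    Subsemigroup.subset_closure ⟨b⁻¹ ^ 2, rfl⟩
  have n2 : ((b⁻¹ ^ 3)⁻¹ * (a⁻¹ * b * a * b⁻¹) * b⁻¹ ^ 3) ∈ S :=
    Subsemigroup.subset_closure ⟨b⁻¹ ^ 3, rfl⟩
  have n3 : (a * (a⁻¹ * b * a * b⁻¹) * a⁻¹) ∈ S := by
    have h3 : a * (a⁻¹ * b * a * b⁻¹) * a⁻¹ = (a⁻¹)⁻¹ * (a⁻¹ * b * a * b⁻¹) * a⁻¹ := by group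
    exact Subsemigroup.subset_closure ⟨a⁻¹, h3⟩
  have e1 : b⁻¹ ^ 2 * a⁻¹ * b ^ 3 * a =
      ((a⁻¹ * b ^ 3)⁻¹ * (a⁻¹ * b * a * b⁻¹) * (a⁻¹ * b ^ 3)) *
        ((a⁻¹ * b ^ 4)⁻¹ * (a⁻¹ * b * a * b⁻¹) * (a⁻¹ * b ^ 4)) *
        (b⁻¹ * (a⁻¹ * b * a * b⁻¹) * b) := by
    calc b⁻¹ ^ 2 * a⁻¹ * b ^ 3 * a
        = (b⁻¹ ^ 2 * a * b⁻¹ ^ 2) *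
            (b ^ 2 * a⁻¹ ^ 2 * b ^ 2 * (a⁻¹ * b ^ 3 * a⁻¹)⁻¹) *
            (b⁻¹ ^ 2 * a * b⁻¹ ^ 2)⁻¹ *
            (((a⁻¹ * b ^ 3)⁻¹ * (a⁻¹ * b * a * b⁻¹) * (a⁻¹ * b ^ 3)) *
              ((a⁻¹ * b ^ 4)⁻¹ * (a⁻¹ * b * a * b⁻¹) * (a⁻¹ * b ^ 4)) *
              (b⁻¹ * (a⁻¹ * b * a * b⁻¹) * b)) := by group
      _ = _ := by rw [hr]; group
  have e2 : b ^ 2 * a * b⁻¹ ^ 3 * a⁻¹ =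
      ((b⁻¹ ^ 2)⁻¹ * (a⁻¹ * b * a * b⁻¹) * b⁻¹ ^ 2) *
        ((b⁻¹ ^ 3)⁻¹ * (a⁻¹ * b * a * b⁻¹) * b⁻¹ ^ 3) *
        (a * (a⁻¹ * b * a * b⁻¹) * a⁻¹) := by
    calc b ^ 2 * a * b⁻¹ ^ 3 * a⁻¹
        = (b ^ 2 * a * b⁻¹ ^ 2) *
            (b ^ 2 * a⁻¹ ^ 2 * b ^ 2 * (a⁻¹ * b ^ 3 * a⁻¹)⁻¹)⁻¹ *
            (b ^ 2 * a * b⁻¹ ^ 2)⁻¹ *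
            (((b⁻¹ ^ 2)⁻¹ * (a⁻¹ * b * a * b⁻¹) * b⁻¹ ^ 2) *
              ((b⁻¹ ^ 3)⁻¹ * (a⁻¹ * b * a * b⁻¹) * b⁻¹ ^ 3) *
              (a * (a⁻¹ * b * a * b⁻¹) * a⁻¹)) := by group
      _ = _ := by rw [hr]; group
  refine ⟨?_, ?_, ?_⟩
  · rw [show (b⁻¹ ^ 2 * a⁻¹ * b ^ 3 * a : PresentedGroup FiveTwoRels) = _ from e1]
    exact mul_mem (mul_mem m1 m2) m3
  · rw [show (b ^ 2 * a * b⁻¹ ^ 3 * a⁻¹ : PresentedGroup FiveTwoRels) = _ from e2]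
    exact mul_mem (mul_mem n1 n2) n3
  · calc a ^ 4 * (b⁻¹ ^ 2 * a⁻¹ * b ^ 3 * a) * a⁻¹ ^ 4 * (b ^ 2 * a * b⁻¹ ^ 3 * a⁻¹)
        = (a ^ 2 * b ^ 2 * a * b⁻¹ ^ 3 * a) *
            (b ^ 2 * a⁻¹ ^ 2 * b ^ 2 * (a⁻¹ * b ^ 3 * a⁻¹)⁻¹)⁻¹ *
            (a ^ 2 * b ^ 2 * a * b⁻¹ ^ 3 * a)⁻¹ *
            (a ^ 2 * (b ^ 2 * a⁻¹ ^ 2 * b ^ 2 * (a⁻¹ * b ^ 3 * a⁻¹)⁻¹) * (a ^ 2)⁻¹) := by group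
      _ = 1 := by rw [hr]; group
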